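/- Let T > 0, m > 0 and 0 ≤ K < m, and let y : [0,T] → ℝ be differentiable with y(0) ∈ (0,1) and 0 ≤ y'(t) + m·y(t) ≤ K for every t ∈ [0,T]. Then δ := min{1/4, y(0)·e^{−m T}, 1 − max{K/m, y(0)}} satisfies δ ∈ (0, 1/2) and δ ≤ y(t) ≤ 1 − δ for every t ∈ [0,T]. -/

import Mathlib

/-- The spatial average of the phase variable stays uniformly away from the pure phases:
with `δ := min {1/4, y 0 · e^{-mT}, 1 - max {K/m, y 0}}` one has `δ ∈ (0,1/2)` and
`δ ≤ y t ≤ 1 - δ` on `[0,T]`. -/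
theorem average_separation
    (T m K : ℝ) (hT : 0 < T) (hm : 0 < m) (hK0 : 0 ≤ K) (hKm : K < m)
    (y y' : ℝ → ℝ)
    (hy0 : y 0 ∈ Set.Ioo (0:ℝ) 1)
    (hderiv : ∀ t ∈ Set.Icc (0:ℝ) T, HasDerivAt y (y' t) t)
    (hineq : ∀ t ∈ Set.Icc (0:ℝ) T, 0 ≤ y' t + m * y t ∧ y' t + m * y t ≤ K) :
    min (1/4) (min (y 0 * Real.exp (-m * T)) (1 - max (K/m) (y 0))) ∈ Set.Ioo (0:ℝ) (1/2) ∧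
    ∀ t ∈ Set.Icc (0:ℝ) T,
      min (1/4) (min (y 0 * Real.exp (-m * T)) (1 - max (K/m) (y 0))) ≤ y t ∧
      y t ≤ 1 - min (1/4) (min (y 0 * Real.exp (-m * T)) (1 - max (K/m) (y 0))) := by
  obtain ⟨hy0pos, hy0lt⟩ := hy0
  set δ := min (1/4) (min (y 0 * Real.exp (-m * T)) (1 - max (K/m) (y 0))) with hδdef
  have hKm' : K / m < 1 := (div_lt_one hm).2 hKm
  have hMlt : max (K/m) (y 0) < 1 := max_lt hKm' hy0lt
  have hδpos : 0 < δ :=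
    lt_min (by norm_num)
      (lt_min (mul_pos hy0pos (Real.exp_pos _)) (by linarith))
  have hδlt : δ < 1/2 := lt_of_le_of_lt (min_le_left _ _) (by norm_num)
  -- g t = exp(mt) * y t
  set g : ℝ → ℝ := fun t => Real.exp (m * t) * y t with hg
  have hgderiv : ∀ t ∈ Set.Icc (0:ℝ) T,
      HasDerivAt g (Real.exp (m*t) * (y' t + m * y t)) t := by
    intro t ht
    have h1 : HasDerivAt (fun s => Real.exp (m*s)) (m * Real.exp (m*t)) t := by
      simpa [mul_comm, Function.comp_def] using
        (Real.hasDerivAt_exp (m*t)).comp t ((hasDerivAt_id t).const_mul m)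
    have := h1.mul (hderiv t ht)
    refine this.congr_deriv ?_
    ring
  have hcontg : ContinuousOn g (Set.Icc 0 T) :=
    fun t ht => ((hgderiv t ht).continuousAt).continuousWithinAt
  have hgmono : MonotoneOn g (Set.Icc 0 T) := by
    apply monotoneOn_of_hasDerivWithinAt_nonneg (convex_Icc 0 T) hcontg
      (f' := fun t => Real.exp (m*t) * (y' t + m * y t))
    · intro t ht
      rw [interior_Icc] at ht
      exact (hgderiv t (Set.Ioo_subset_Icc_self ht)).hasDerivWithinAt
    · intro t ht
      rw [interior_Icc] at ht
      exact mul_nonneg (Real.exp_pos _).le (hineq t (Set.Ioo_subset_Icc_self ht)).1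
  -- h t = (K/m) * exp(mt) - g t is monotone
  set h : ℝ → ℝ := fun t => (K/m) * Real.exp (m * t) - g t with hh
  have hhmono : MonotoneOn h (Set.Icc 0 T) := by
    apply monotoneOn_of_hasDerivWithinAt_nonneg (convex_Icc 0 T)
      (f' := fun t => Real.exp (m*t) * (K - (y' t + m * y t)))
    · exact ((Real.continuous_exp.comp (continuous_const.mul continuous_id)).continuousOn.const_smul (K/m)).sub hcontg
    · intro t ht
      rw [interior_Icc] at ht
      have ht' := Set.Ioo_subset_Icc_self ht
      have h2 : HasDerivAt (fun s => (K/m) * Real.exp (m*s)) ((K/m) * (m * Real.exp (m*t))) t := by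
        exact HasDerivAt.const_mul _ (by
          simpa [mul_comm, Function.comp_def] using
            (Real.hasDerivAt_exp (m*t)).comp t ((hasDerivAt_id t).const_mul m))
      have := h2.sub (hgderiv t ht')
      have heq : (K/m) * (m * Real.exp (m*t)) - Real.exp (m*t) * (y' t + m * y t)
          = Real.exp (m*t) * (K - (y' t + m * y t)) := by
        field_simp
      rw [heq] at this
      exact this.hasDerivWithinAt
    · intro t ht
      rw [interior_Icc] at ht
      have := (hineq t (Set.Ioo_subset_Icc_self ht)).2
      exact mul_nonneg (Real.exp_pos _).le (by linarith)
  refine ⟨⟨hδpos, hδlt⟩, ?_⟩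
  intro t ht
  have h0mem : (0:ℝ) ∈ Set.Icc (0:ℝ) T := Set.left_mem_Icc.2 hT.le
  have ht0 : 0 ≤ t := ht.1
  have htT : t ≤ T := ht.2
  have he : (1:ℝ) ≤ Real.exp (m*t) := by
    rw [← Real.exp_zero]
    exact Real.exp_le_exp.2 (by positivity)
  have hepos : 0 < Real.exp (m*t) := Real.exp_pos _
  -- lower bound
  have hglow : g 0 ≤ g t := hgmono h0mem ht ht0
  have hg0 : g 0 = y 0 := by simp [hg]
  have hlow : y 0 ≤ Real.exp (m*t) * y t := by rw [← hg0]; exact hglow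
  have hexpT : Real.exp (-m*T) * Real.exp (m*t) ≤ 1 := by
    rw [← Real.exp_add]
    calc Real.exp (-m*T + m*t) ≤ Real.exp 0 := Real.exp_le_exp.2 (by nlinarith)
    _ = 1 := Real.exp_zero
  have hlow' : δ ≤ y t := by
    have h1 : δ ≤ y 0 * Real.exp (-m*T) := le_trans (min_le_right _ _) (min_le_left _ _)
    have h2 : y 0 * Real.exp (-m*T) * Real.exp (m*t) ≤ Real.exp (m*t) * y t := by
      nlinarith [Real.exp_pos (-m*T)]
    nlinarith
  -- upper bound
  have hhlow : h 0 ≤ h t := hhmono h0mem ht ht0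
  have hh0 : h 0 = K/m - y 0 := by simp [hh, hg]
  have hup : Real.exp (m*t) * y t ≤ (K/m) * (Real.exp (m*t) - 1) + y 0 := by
    have : K/m - y 0 ≤ (K/m) * Real.exp (m*t) - Real.exp (m*t) * y t := by
      rw [← hh0]; exact hhlow
    linarith
  have hM : y t ≤ max (K/m) (y 0) := by
    set M := max (K/m) (y 0) with hM
    have h1 : K/m ≤ M := le_max_left _ _
    have h2 : y 0 ≤ M := le_max_right _ _
    nlinarith
  have hδM : δ ≤ 1 - max (K/m) (y 0) := le_trans (min_le_right _ _) (min_le_right _ _)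
  exact ⟨hlow', by linarith⟩
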